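/- For Ω_g, Ω_h > 0 and μ = Ω_h (in the role of the outer exponential rate), ∫₀^∞ (∫_x^∞ ln y · Ω_g e^{-Ω_g y} dy) Ω_h e^{-Ω_h x} dx = ∫₀^∞ (ln x e^{-Ω_g x} - Ei(-Ω_g x)) Ω_h e^{-Ω_h x} dx, and this equals ln((Ω_h + Ω_g)/Ω_g) - Ω_h (C + ln(Ω_h + Ω_g))/(Ω_h + Ω_g). -/

import Mathlib

open MeasureTheory Real

open Set Filter Topology

set_option linter.unnecessarySeqFocus false

lemma t6aux_L1c : (∫ t in Ioi (0:ℝ), ((Real.log t * rexp (-t) : ℝ) : ℂ))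
    = -(Real.eulerMascheroniConstant : ℂ) := by
  have hd := Complex.hasDerivAt_GammaIntegral (s := 1) (by norm_num)
  simp only [sub_self, Complex.cpow_zero, one_mul] at hd
  have heq : Complex.Gamma =ᶠ[𝓝 (1:ℂ)] Complex.GammaIntegral := by
    filter_upwards [(isOpen_lt continuous_const Complex.continuous_re).mem_nhds
      (by norm_num : (0:ℂ).re < (1:ℂ).re)] with s hs
    exact Complex.Gamma_eq_integral hs
  have h1 := (hd.congr_of_eventuallyEq heq).unique Complex.hasDerivAt_Gamma_one
  rw [← h1]
  norm_cast

lemma t6aux_L1int : IntegrableOn (fun t : ℝ => Real.log t * rexp (-t)) (Ioi 0) := by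
  have h : ¬ ((∫ t in Ioi (0:ℝ), ((Real.log t * rexp (-t) : ℝ) : ℂ)) = 0) := by
    rw [t6aux_L1c]
    intro h
    have h2 : (Real.eulerMascheroniConstant : ℂ) = 0 := by linear_combination -h
    have := Real.one_half_lt_eulerMascheroniConstant
    norm_cast at h2
    linarith
  have hint : Integrable (fun t : ℝ => ((Real.log t * rexp (-t) : ℝ) : ℂ))
      (volume.restrict (Ioi 0)) := by
    by_contra hc
    exact h (integral_undef hc)
  have := hint.re
  exact (by simpa [RCLike.re_eq_complex_re, ← Complex.ofReal_neg, Complex.exp_ofReal_re] using this :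
    Integrable (fun t : ℝ => Real.log t * rexp (-t)) (volume.restrict (Ioi 0)))

lemma t6aux_L1 : ∫ t in Ioi (0:ℝ), Real.log t * rexp (-t) = -Real.eulerMascheroniConstant := by
  have h2 := congrArg Complex.re t6aux_L1c
  rw [← RCLike.re_eq_complex_re, ← integral_re] at h2
  · simpa [RCLike.re_eq_complex_re, ← Complex.ofReal_neg, Complex.exp_ofReal_re] using h2
  · exact (t6aux_L1int.ofReal (𝕜 := ℂ))

lemma t6aux_expInt : IntegrableOn (fun t : ℝ => rexp (-t)) (Ioi (0:ℝ)) := by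
  simpa using exp_neg_integrableOn_Ioi 0 one_pos

lemma t6aux_Gint {a : ℝ} (ha : 0 < a) :
    IntegrableOn (fun t : ℝ => Real.log (t / a) * rexp (-t)) (Ioi 0) := by
  have h1 : IntegrableOn (fun t : ℝ => Real.log t * rexp (-t) - Real.log a * rexp (-t))
      (Ioi 0) := t6aux_L1int.sub (t6aux_expInt.const_mul _)
  refine h1.congr_fun (fun t ht => ?_) measurableSet_Ioi
  rw [Real.log_div (ne_of_gt ht) (ne_of_gt ha)]; ring

lemma t6aux_Gval {a : ℝ} (ha : 0 < a) :
    ∫ t in Ioi (0:ℝ), Real.log (t / a) * rexp (-t)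
      = -Real.eulerMascheroniConstant - Real.log a := by
  have heq : Set.EqOn (fun t : ℝ => Real.log (t / a) * rexp (-t))
      (fun t : ℝ => Real.log t * rexp (-t) - Real.log a * rexp (-t)) (Ioi 0) := by
    intro t ht
    simp only
    rw [Real.log_div (ne_of_gt ht) (ne_of_gt ha)]; ring
  rw [setIntegral_congr_fun measurableSet_Ioi heq,
    integral_sub t6aux_L1int (t6aux_expInt.const_mul _), t6aux_L1, integral_const_mul,
    integral_exp_neg_Ioi_zero]
  ring

lemma t6aux_L2int {a : ℝ} (ha : 0 < a) :
    IntegrableOn (fun x : ℝ => Real.log x * rexp (-(a * x))) (Ioi 0) := by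
  have h := (integrableOn_Ioi_comp_mul_left_iff
    (fun t : ℝ => Real.log (t / a) * rexp (-t)) 0 ha).2 (by rw [mul_zero]; exact t6aux_Gint ha)
  refine h.congr_fun (fun x hx => ?_) measurableSet_Ioi
  dsimp only
  rw [mul_div_cancel_left₀ _ (ne_of_gt ha)]

lemma t6aux_L2 {a : ℝ} (ha : 0 < a) :
    ∫ x in Ioi (0:ℝ), Real.log x * rexp (-(a * x))
      = -(Real.eulerMascheroniConstant + Real.log a) / a := by
  have heq : Set.EqOn (fun x : ℝ => Real.log x * rexp (-(a * x)))
      (fun x : ℝ => Real.log (a * x / a) * rexp (-(a * x))) (Ioi 0) := by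
    intro x hx
    simp only
    rw [mul_div_cancel_left₀ _ (ne_of_gt ha)]
  rw [setIntegral_congr_fun measurableSet_Ioi heq]
  have h := integral_comp_mul_left_Ioi (fun t : ℝ => Real.log (t / a) * rexp (-t)) 0 ha
  simp only [mul_zero] at h
  rw [h, t6aux_Gval ha, smul_eq_mul]
  field_simp
  ring

lemma t6aux_tendF {b : ℝ} (hb : 0 < b) :
    Filter.Tendsto (fun y : ℝ => Real.log y * rexp (-(b * y))) atTop (𝓝 0) := by
  have h0 := tendsto_rpow_mul_exp_neg_mul_atTop_nhds_zero 1 b hb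
  refine squeeze_zero_norm' ?_ h0
  filter_upwards [Filter.eventually_ge_atTop (1:ℝ)] with y hy
  have hy0 : 0 < y := lt_of_lt_of_le one_pos hy
  have h1 : |Real.log y| ≤ y := by
    rw [abs_of_nonneg (Real.log_nonneg hy)]
    linarith [Real.log_le_sub_one_of_pos hy0]
  calc ‖Real.log y * rexp (-(b * y))‖ = |Real.log y| * rexp (-(b*y)) := by
        rw [norm_mul, Real.norm_eq_abs, Real.norm_eq_abs, abs_of_pos (exp_pos _)]
    _ ≤ y * rexp (-(b*y)) := by
        apply mul_le_mul_of_nonneg_right h1 (le_of_lt (exp_pos _))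
    _ = y ^ (1:ℝ) * rexp (-b * y) := by rw [Real.rpow_one]; ring_nf

lemma t6aux_divInt {b x : ℝ} (hb : 0 < b) (hx : 0 < x) :
    IntegrableOn (fun y : ℝ => rexp (-(b * y)) / y) (Ioi x) := by
  have hg : IntegrableOn (fun y : ℝ => rexp (-b * y) / x) (Ioi x) :=
    (exp_neg_integrableOn_Ioi x hb).div_const _
  refine hg.integrable.mono ?_ ?_
  · refine (ContinuousOn.aestronglyMeasurable ?_ measurableSet_Ioi)
    exact (Real.continuous_exp.comp (continuous_const.mul continuous_id).neg).continuousOn.div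
      continuousOn_id (fun y hy => ne_of_gt (lt_trans hx hy))
  · rw [ae_restrict_iff' measurableSet_Ioi]
    filter_upwards with y hy
    have hy0 : 0 < y := lt_trans hx hy
    rw [Real.norm_eq_abs, Real.norm_eq_abs, abs_of_pos (by positivity), abs_of_pos (by positivity)]
    rw [neg_mul, div_le_div_iff₀ hy0 hx]
    have := mul_le_mul_of_nonneg_left (le_of_lt hy) (le_of_lt (exp_pos (-(b*y))))
    linarith

lemma t6aux_logExpInt {b x : ℝ} (hb : 0 < b) (hx : 0 < x) :
    IntegrableOn (fun y : ℝ => Real.log y * (b * rexp (-(b * y)))) (Ioi x) := by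
  have h0 : IntegrableOn (fun y : ℝ => b * (Real.log y * rexp (-(b * y)))) (Ioi 0) :=
    (t6aux_L2int hb).const_mul b
  have h := h0.mono_set (Ioi_subset_Ioi (le_of_lt hx))
  refine h.congr_fun (fun y hy => by ring) measurableSet_Ioi

lemma t6aux_L3 {b x : ℝ} (hb : 0 < b) (hx : 0 < x) :
    ∫ y in Ioi x, Real.log y * (b * rexp (-(b * y)))
      = Real.log x * rexp (-(b * x)) + ∫ u in Ioi (b * x), rexp (-u) / u := by
  set F : ℝ → ℝ := fun y => -(Real.log y * rexp (-(b * y))) with hF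
  have hderiv : ∀ y ∈ Ioi x, HasDerivAt F
      (Real.log y * (b * rexp (-(b * y))) - rexp (-(b * y)) / y) y := by
    intro y hy
    have hy0 : 0 < y := lt_trans hx hy
    have h1 : HasDerivAt Real.log y⁻¹ y := Real.hasDerivAt_log (ne_of_gt hy0)
    have h2 : HasDerivAt (fun y : ℝ => rexp (-(b * y))) (-b * rexp (-(b * y))) y := by
      have := (((hasDerivAt_id y).const_mul b).neg).exp
      have h4 : rexp (-(b * id y)) * -(b * 1) = -b * rexp (-(b * y)) := by simp [id]; ring
      replace this := this.congr_deriv h4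
      exact this
    have h3 := (h1.mul h2).neg
    refine h3.congr_deriv ?_
    ring
  have hcont : ContinuousWithinAt F (Ici x) x := by
    apply ContinuousAt.continuousWithinAt
    exact ((Real.continuousAt_log (ne_of_gt hx)).mul
      ((Real.continuous_exp.comp (continuous_const.mul continuous_id).neg).continuousAt)).neg
  have hint : IntegrableOn (fun y : ℝ =>
      Real.log y * (b * rexp (-(b * y))) - rexp (-(b * y)) / y) (Ioi x) :=
    (t6aux_logExpInt hb hx).sub (t6aux_divInt hb hx)
  have htend : Filter.Tendsto F atTop (𝓝 0) := by
    simpa using (t6aux_tendF hb).neg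
  have key := integral_Ioi_of_hasDerivAt_of_tendsto hcont hderiv hint htend
  rw [integral_sub (t6aux_logExpInt hb hx) (t6aux_divInt hb hx)] at key
  have hsub : ∫ y in Ioi x, rexp (-(b * y)) / y = ∫ u in Ioi (b * x), rexp (-u) / u := by
    have h := integral_comp_mul_left_Ioi (fun u : ℝ => rexp (-u) / u) x hb
    have heq : Set.EqOn (fun y : ℝ => rexp (-(b * y)) / (b * y))
        (fun y : ℝ => b⁻¹ * (rexp (-(b * y)) / y)) (Ioi x) := by
      intro y hy
      field_simp
    rw [setIntegral_congr_fun measurableSet_Ioi heq, integral_const_mul] at h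
    rw [smul_eq_mul] at h
    have hb' : b⁻¹ ≠ 0 := inv_ne_zero (ne_of_gt hb)
    field_simp at h
    try exact h
    try exact h.symm
  rw [hsub] at key
  have : F x = -(Real.log x * rexp (-(b * x))) := rfl
  rw [this] at key
  linarith [key]

lemma t6aux_L4 {b c : ℝ} (hb : 0 < b) (hc : 0 < c) :
    ∫ x in Ioi (0:ℝ), (∫ y in Ioi x, Real.log y * (b * rexp (-(b * y)))) * (c * rexp (-(c * x)))
      = ∫ y in Ioi (0:ℝ), Real.log y * (b * rexp (-(b * y))) * (1 - rexp (-(c * y))) := by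
  set g : ℝ → ℝ := fun y => Real.log y * (b * rexp (-(b * y))) with hg
  set f : ℝ → ℝ → ℝ := fun x y => (Ioi x).indicator g y * (c * rexp (-(c * x))) with hf
  -- integrability of uncurry f on product
  have hmeas : AEStronglyMeasurable (Function.uncurry f)
      (((volume : Measure ℝ).restrict (Ioi 0)).prod ((volume : Measure ℝ).restrict (Ioi 0))) := by
    have h1 : Function.uncurry f = fun p : ℝ × ℝ =>
        ({q : ℝ × ℝ | q.1 < q.2}.indicator (fun q => g q.2) p) * (c * rexp (-(c * p.1))) := by
      ext p
      simp only [Function.uncurry, hf]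
      by_cases h : p.1 < p.2 <;>
        simp [Set.indicator_apply, Set.mem_Ioi, Set.mem_setOf_eq, h]
    rw [h1]
    apply Measurable.aestronglyMeasurable
    apply Measurable.mul
    · exact (((Real.measurable_log.comp measurable_snd).mul
        ((Real.measurable_exp.comp ((measurable_snd.const_mul b).neg)).const_mul b))).indicator
        (measurableSet_lt measurable_fst measurable_snd)
    · exact (Real.measurable_exp.comp ((measurable_fst.const_mul c).neg)).const_mul c
  have hintg : Integrable (fun y : ℝ => |Real.log y| * (b * rexp (-(b * y))))
      ((volume : Measure ℝ).restrict (Ioi 0)) := by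
    have h0 : IntegrableOn (fun y : ℝ => b * (Real.log y * rexp (-(b * y)))) (Ioi 0) :=
      (t6aux_L2int hb).const_mul b
    have h0' : IntegrableOn (fun y : ℝ => |b * (Real.log y * rexp (-(b * y)))|) (Ioi 0) := h0.abs
    refine h0'.congr_fun (fun y hy => ?_) measurableSet_Ioi
    simp only [abs_mul, abs_of_pos hb, abs_of_pos (exp_pos _)]
    ring
  have hintc : Integrable (fun x : ℝ => c * rexp (-(c * x)))
      ((volume : Measure ℝ).restrict (Ioi 0)) := by
    have h0' : IntegrableOn (fun x : ℝ => c * rexp (-c * x)) (Ioi 0) :=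
      (exp_neg_integrableOn_Ioi 0 hc).const_mul c
    exact h0'.congr_fun (fun x hx => by simp only [neg_mul]) measurableSet_Ioi
  have hprod : Integrable (fun p : ℝ × ℝ => (c * rexp (-(c * p.1))) * (|Real.log p.2| * (b * rexp (-(b * p.2)))))
      (((volume : Measure ℝ).restrict (Ioi 0)).prod ((volume : Measure ℝ).restrict (Ioi 0))) :=
    hintc.mul_prod hintg
  have hint : Integrable (Function.uncurry f)
      (((volume : Measure ℝ).restrict (Ioi 0)).prod ((volume : Measure ℝ).restrict (Ioi 0))) := by
    refine hprod.mono hmeas ?_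
    filter_upwards with p
    simp only [Function.uncurry, hf, Real.norm_eq_abs, abs_mul]
    have h2 : |(Ioi p.1).indicator g p.2| ≤ |g p.2| := by
      rcases Set.indicator_eq_zero_or_self (Ioi p.1) g p.2 with h | h <;> rw [h] <;> simp
    have h3 : |g p.2| ≤ |Real.log p.2| * (b * rexp (-(b * p.2))) := by
      rw [hg]; simp only [abs_mul, abs_of_pos hb, abs_of_pos (exp_pos _)]; exact le_refl _
    have h4 : (0:ℝ) ≤ |c| * |rexp (-(c * p.1))| := by positivity
    calc |(Ioi p.1).indicator g p.2| * (|c| * |rexp (-(c * p.1))|)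
        ≤ (|Real.log p.2| * (b * rexp (-(b * p.2)))) * (|c| * |rexp (-(c * p.1))|) :=
          mul_le_mul_of_nonneg_right (h2.trans h3) h4
      _ = |c| * |rexp (-(c * p.1))| * (|(|Real.log p.2|)| * (|b| * |rexp (-(b * p.2))|)) := by
          simp only [abs_abs, Real.abs_exp, abs_of_pos hb, abs_of_pos hc]
          ring
  -- rewrite LHS as iterated integral of f and swap
  have hswap := MeasureTheory.integral_integral_swap (f := f) hint
  have hLHS : ∫ x in Ioi (0:ℝ), (∫ y in Ioi x, g y) * (c * rexp (-(c * x)))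
      = ∫ x in Ioi (0:ℝ), ∫ y in Ioi (0:ℝ), f x y := by
    refine setIntegral_congr_fun measurableSet_Ioi (fun x hx => ?_)
    simp only [hf]
    rw [integral_mul_const, integral_indicator measurableSet_Ioi,
      Measure.restrict_restrict measurableSet_Ioi,
      Set.Ioi_inter_Ioi, max_eq_left (le_of_lt hx)]
  have hRHS : ∫ y in Ioi (0:ℝ), (∫ x in Ioi (0:ℝ), f x y)
      = ∫ y in Ioi (0:ℝ), g y * (1 - rexp (-(c * y))) := by
    refine setIntegral_congr_fun measurableSet_Ioi (fun y hy => ?_)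
    simp only [hf]
    have h5 : ∀ x : ℝ, (Ioi x).indicator g y * (c * rexp (-(c * x)))
        = (Iio y).indicator (fun x => c * rexp (-(c * x))) x * g y := by
      intro x
      by_cases h : x < y
      · rw [Set.indicator_of_mem (Set.mem_Ioi.mpr h), Set.indicator_of_mem (Set.mem_Iio.mpr h)]
        ring
      · rw [Set.indicator_of_notMem (fun hm => h (Set.mem_Ioi.mp hm)),
          Set.indicator_of_notMem (fun hm => h (Set.mem_Iio.mp hm))]
        ring
    simp_rw [h5]
    rw [integral_mul_const, integral_indicator measurableSet_Iio,
      Measure.restrict_restrict measurableSet_Iio]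
    have h6 : Iio y ∩ Ioi 0 = Ioo 0 y := by
      ext t; simp [Set.mem_Ioo, and_comm]
    rw [h6]
    have h7 : ∫ x in Ioo (0:ℝ) y, c * rexp (-(c * x)) = 1 - rexp (-(c * y)) := by
      rw [← integral_Ioc_eq_integral_Ioo, ← intervalIntegral.integral_of_le (le_of_lt hy)]
      have h8 : ∀ x ∈ Set.uIcc (0:ℝ) y, HasDerivAt (fun t => -rexp (-(c * t)))
          (c * rexp (-(c * x))) x := by
        intro x _
        have := (((hasDerivAt_id x).const_mul c).neg).exp.neg
        have h9 : -(rexp (-(c * id x)) * -(c * 1)) = c * rexp (-(c * x)) := by simp [id]; ring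
        replace this := this.congr_deriv h9
        exact this
      rw [intervalIntegral.integral_eq_sub_of_hasDerivAt h8 ?_]
      · simp only [mul_zero, neg_zero, Real.exp_zero]; ring
      · apply Continuous.intervalIntegrable
        exact continuous_const.mul (Real.continuous_exp.comp (continuous_const.mul continuous_id).neg)
    rw [h7]
    ring
  rw [hLHS, hswap, hRHS]

/-- Evaluation of the term T₆ in Proposition 3: for `Ω_g, Ω_h > 0`,
`∫₀^∞ (∫_x^∞ ln y · Ω_g e^{-Ω_g y} dy) Ω_h e^{-Ω_h x} dx
  = ∫₀^∞ (ln x e^{-Ω_g x} - Ei(-Ω_g x)) Ω_h e^{-Ω_h x} dx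
  = ln((Ω_h+Ω_g)/Ω_g) - Ω_h (C + ln(Ω_h+Ω_g))/(Ω_h+Ω_g)`,
with `Ei(-t) = -∫_t^∞ e^{-u}/u du` and `C` the Euler–Mascheroni constant. -/
theorem t6_integral_evaluation {Ωg Ωh : ℝ} (hΩg : 0 < Ωg) (hΩh : 0 < Ωh) :
    (∫ x in Set.Ioi (0 : ℝ),
        (∫ y in Set.Ioi x, Real.log y * (Ωg * Real.exp (-(Ωg * y)))) *
          (Ωh * Real.exp (-(Ωh * x)))) =
      (∫ x in Set.Ioi (0 : ℝ),
        (Real.log x * Real.exp (-(Ωg * x)) -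
            (-(∫ u in Set.Ioi (Ωg * x), Real.exp (-u) / u))) *
          (Ωh * Real.exp (-(Ωh * x)))) ∧
    (∫ x in Set.Ioi (0 : ℝ),
        (∫ y in Set.Ioi x, Real.log y * (Ωg * Real.exp (-(Ωg * y)))) *
          (Ωh * Real.exp (-(Ωh * x)))) =
      Real.log ((Ωh + Ωg) / Ωg) -
        Ωh * (Real.eulerMascheroniConstant + Real.log (Ωh + Ωg)) / (Ωh + Ωg) := by
  have hS : (0:ℝ) < Ωh + Ωg := by positivity
  constructor
  · refine setIntegral_congr_fun measurableSet_Ioi (fun x hx => ?_)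
    rw [t6aux_L3 hΩg hx, sub_neg_eq_add]
  · rw [t6aux_L4 hΩg hΩh]
    have heq : Set.EqOn
        (fun y : ℝ => Real.log y * (Ωg * rexp (-(Ωg * y))) * (1 - rexp (-(Ωh * y))))
        (fun y : ℝ => Ωg * (Real.log y * rexp (-(Ωg * y)))
          - Ωg * (Real.log y * rexp (-((Ωh + Ωg) * y)))) (Ioi 0) := by
      intro y _
      simp only
      rw [show -((Ωh + Ωg) * y) = -(Ωg * y) + -(Ωh * y) by ring, Real.exp_add]
      ring
    rw [setIntegral_congr_fun measurableSet_Ioi heq,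
      integral_sub ((t6aux_L2int hΩg).const_mul Ωg) ((t6aux_L2int hS).const_mul Ωg),
      integral_const_mul, integral_const_mul, t6aux_L2 hΩg, t6aux_L2 hS,
      Real.log_div (ne_of_gt hS) (ne_of_gt hΩg)]
    field_simp
    ring
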